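/- With Σ₁ and Σ₂ the two 3-node Gaussian tree covariance matrices as above, the Chernoff information between N(0,Σ₁) and N(0,Σ₂) equals (1/2)·ln(1 + (1/2)·(w₂²/(1−w₂²))·(1−w₁)), which can be written as ln((λ_max + 1)/(2√λ_max)) where λ_max = (√β + w₂)/(√β − w₂), β = w₂² + 2(1−w₂²)/(1−w₁). -/

import Mathlib

set_option maxHeartbeats 1000000


open Matrix

/-- KL divergence between zero-mean 3-dimensional Gaussians `N(0,S)`, `N(0,T)`. -/
noncomputable def gaussVecKL3 (S T : Matrix (Fin 3) (Fin 3) ℝ) : ℝ :=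
  (1/2) * Real.log (T.det / S.det) + (1/2) * (T⁻¹ * S).trace - (3 : ℝ) / 2

/-- The full-observation Chernoff information between the two 3-node Gaussian
trees equals `(1/2)ln(1 + (1/2)(w₂²/(1-w₂²))(1-w₁)) = ln((λ_max+1)/(2√λ_max))`.
Here `λ* = 1/2` (equal determinants), so
`CI(Σ₁‖Σ₂) = D(Σ_{1/2}‖Σ₂)` with `Σ_{1/2}⁻¹ = (Σ₁⁻¹ + Σ₂⁻¹)/2`. -/
theorem stmt_12 (w1 w2 : ℝ) (hw1 : |w1| < 1) (hw2 : 0 < |w2|) (hw2' : |w2| < 1) :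
    let S1 : Matrix (Fin 3) (Fin 3) ℝ := !![(1:ℝ), w1, w1*w2; w1, 1, w2; w1*w2, w2, 1]
    let S2 : Matrix (Fin 3) (Fin 3) ℝ := !![(1:ℝ), w1, w2; w1, 1, w1*w2; w2, w1*w2, 1]
    let Smid : Matrix (Fin 3) (Fin 3) ℝ := ((1/2 : ℝ) • S1⁻¹ + (1/2 : ℝ) • S2⁻¹)⁻¹
    let lmax : ℝ := (Real.sqrt (w2^2 + 2*(1 - w2^2)/(1 - w1)) + w2) /
                      (Real.sqrt (w2^2 + 2*(1 - w2^2)/(1 - w1)) - w2)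
    gaussVecKL3 Smid S2 = (1/2) * Real.log (1 + (1/2) * (w2^2/(1 - w2^2)) * (1 - w1)) ∧
    gaussVecKL3 Smid S2 = Real.log ((lmax + 1) / (2 * Real.sqrt lmax)) := by
  intro S1 S2 Smid lmax
  obtain ⟨hw1l, hw1r⟩ := abs_lt.mp hw1
  obtain ⟨hw2l, hw2r⟩ := abs_lt.mp hw2'
  have h1 : (0:ℝ) < 1 - w1^2 := by nlinarith
  have h2 : (0:ℝ) < 1 - w2^2 := by nlinarith
  have h1ne : (1:ℝ) - w1^2 ≠ 0 := ne_of_gt h1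
  have h2ne : (1:ℝ) - w2^2 ≠ 0 := ne_of_gt h2
  have h1m : (0:ℝ) < 1 - w1 := by linarith
  have h1mne : (1:ℝ) - w1 ≠ 0 := ne_of_gt h1m
  have hD : (0:ℝ) < 2*(1 - w2^2) + (1 - w1)*w2^2 := by nlinarith
  have hDne : (2:ℝ)*(1 - w2^2) + (1 - w1)*w2^2 ≠ 0 := ne_of_gt hD
  have hS1d : S1 = !![(1:ℝ), w1, w1*w2; w1, 1, w2; w1*w2, w2, 1] := rfl
  have hS2d : S2 = !![(1:ℝ), w1, w2; w1, 1, w1*w2; w2, w1*w2, 1] := rfl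
  -- explicit inverses
  set E1 : Matrix (Fin 3) (Fin 3) ℝ :=
    !![1/(1-w1^2), -w1/(1-w1^2), 0;
       -w1/(1-w1^2), 1/(1-w1^2) + 1/(1-w2^2) - 1, -w2/(1-w2^2);
       0, -w2/(1-w2^2), 1/(1-w2^2)] with hE1
  set E2 : Matrix (Fin 3) (Fin 3) ℝ :=
    !![1/(1-w1^2) + 1/(1-w2^2) - 1, -w1/(1-w1^2), -w2/(1-w2^2);
       -w1/(1-w1^2), 1/(1-w1^2), 0;
       -w2/(1-w2^2), 0, 1/(1-w2^2)] with hE2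
  set M : Matrix (Fin 3) (Fin 3) ℝ :=
    !![(4*(1-w2^2)+(1-w1^2)*w2^2)/(2*(2*(1-w2^2)+(1-w1)*w2^2)),
       ((1-w1^2)*w2^2+4*w1*(1-w2^2))/(2*(2*(1-w2^2)+(1-w1)*w2^2)),
       w2*(1+w1)/2;
       ((1-w1^2)*w2^2+4*w1*(1-w2^2))/(2*(2*(1-w2^2)+(1-w1)*w2^2)),
       (4*(1-w2^2)+(1-w1^2)*w2^2)/(2*(2*(1-w2^2)+(1-w1)*w2^2)),
       w2*(1+w1)/2;
       w2*(1+w1)/2, w2*(1+w1)/2, (2-(1-w1)*w2^2)/2] with hM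
  have hS1inv : S1⁻¹ = E1 := by
    apply Matrix.inv_eq_right_inv
    ext i j
    fin_cases i <;> fin_cases j <;>
      simp [hE1, hS1d, Matrix.mul_apply, Fin.sum_univ_three, Matrix.one_apply] <;>
      field_simp <;> ring
  have hS2inv : S2⁻¹ = E2 := by
    apply Matrix.inv_eq_right_inv
    ext i j
    fin_cases i <;> fin_cases j <;>
      simp [hE2, hS2d, Matrix.mul_apply, Fin.sum_univ_three, Matrix.one_apply] <;>
      field_simp <;> ring
  set A : Matrix (Fin 3) (Fin 3) ℝ :=
    !![1/(1-w1^2) + w2^2/(2*(1-w2^2)), -w1/(1-w1^2), -w2/(2*(1-w2^2));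
       -w1/(1-w1^2), 1/(1-w1^2) + w2^2/(2*(1-w2^2)), -w2/(2*(1-w2^2));
       -w2/(2*(1-w2^2)), -w2/(2*(1-w2^2)), 1/(1-w2^2)] with hA
  have hAdd : (1/2 : ℝ) • E1 + (1/2 : ℝ) • E2 = A := by
    ext i j
    fin_cases i <;> fin_cases j <;>
      simp [hE1, hE2, hA, Matrix.add_apply, Matrix.smul_apply] <;>
      field_simp
    all_goals ring_nf
    all_goals tauto
  have hSmid : Smid = M := by
    show ((1/2 : ℝ) • S1⁻¹ + (1/2 : ℝ) • S2⁻¹)⁻¹ = M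
    rw [hS1inv, hS2inv, hAdd]
    apply Matrix.inv_eq_right_inv
    ext i j
    fin_cases i <;> fin_cases j <;>
      simp [hA, hM, Matrix.mul_apply, Fin.sum_univ_three, Matrix.one_apply] <;>
      field_simp <;> ring
  have hS2det : S2.det = (1-w1^2)*(1-w2^2) := by
    rw [hS2d]
    simp [Matrix.det_fin_three]
    ring
  have hMdet : M.det = 2*(1-w1^2)*(1-w2^2)^2 / (2*(1-w2^2)+(1-w1)*w2^2) := by
    rw [hM]
    simp [Matrix.det_fin_three]
    field_simp
    ring
  have htr : (S2⁻¹ * M).trace = 3 := by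
    rw [hS2inv, hE2, hM]
    simp [Matrix.trace_fin_three, Matrix.mul_apply, Fin.sum_univ_three]
    field_simp
    ring
  have hK : (0:ℝ) < 1 + (1/2) * (w2^2/(1 - w2^2)) * (1 - w1) := by
    have : 0 ≤ w2^2/(1 - w2^2) := by positivity
    nlinarith
  have hdet : S2.det / M.det = 1 + (1/2) * (w2^2/(1 - w2^2)) * (1 - w1) := by
    rw [hS2det, hMdet]
    field_simp
  have main : gaussVecKL3 Smid S2 =
      (1/2) * Real.log (1 + (1/2) * (w2^2/(1 - w2^2)) * (1 - w1)) := by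
    rw [gaussVecKL3, hSmid, htr, hdet]
    ring
  refine ⟨main, main.trans ?_⟩
  -- second form
  set s : ℝ := Real.sqrt (w2^2 + 2*(1 - w2^2)/(1 - w1)) with hs
  have hb : (0:ℝ) < w2^2 + 2*(1 - w2^2)/(1 - w1) := by positivity
  have hs2 : s^2 = w2^2 + 2*(1 - w2^2)/(1 - w1) := Real.sq_sqrt hb.le
  have hspos : 0 < s := Real.sqrt_pos.mpr hb
  have hsw2 : w2^2 < s^2 := by
    rw [hs2]
    have : 0 < 2*(1 - w2^2)/(1 - w1) := by positivity
    linarith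
  have hsm : 0 < s - w2 := by nlinarith
  have hsp : 0 < s + w2 := by nlinarith
  have hldef : lmax = (s + w2)/(s - w2) := rfl
  have hl : 0 < lmax := by rw [hldef]; positivity
  have hsq : 0 < s^2 - w2^2 := by linarith
  have e2 : (lmax + 1)^2 / (4*lmax) = s^2/(s^2 - w2^2) := by
    rw [hldef]
    field_simp
    ring
  have e3 : s^2/(s^2 - w2^2) = 1 + (1/2) * (w2^2/(1 - w2^2)) * (1 - w1) := by
    rw [hs2, show w2^2 + 2*(1 - w2^2)/(1 - w1) - w2^2 = 2*(1 - w2^2)/(1 - w1) by ring]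
    field_simp
    ring
  have hslpos : 0 < Real.sqrt lmax := Real.sqrt_pos.mpr hl
  have hrpos : 0 < (lmax + 1) / (2 * Real.sqrt lmax) := by positivity
  have hr2 : ((lmax + 1) / (2 * Real.sqrt lmax))^2
      = 1 + (1/2) * (w2^2/(1 - w2^2)) * (1 - w1) := by
    rw [div_pow, mul_pow, Real.sq_sqrt hl.le, show (2:ℝ)^2 = 4 from by norm_num, e2, e3]
  rw [show (1:ℝ) + (1/2) * (w2^2/(1 - w2^2)) * (1 - w1)
      = ((lmax + 1) / (2 * Real.sqrt lmax))^2 from hr2.symm,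
    Real.log_pow]
  push_cast
  ring
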